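/- Let b, d : ℕ → ℍ and let ε > 0 be such that for every x ∈ ℍ with |x| < ε both series Σ_{n=0}^∞ P_n(x)·b_n and Σ_{n=0}^∞ P_n(x)·d_n converge and their sums coincide. Then b_n = d_n for every n. (In particular, a real analytic function f(x₀) = Σ_{n} x₀ⁿ·a_n near the origin has at most one — namely f(x) = Σ_n P_n(x)·(a_n/3ⁿ) — extension of the form Σ_n P_n(x)·b_n.) -/

import Mathlib

open Quaternion

noncomputable section

/-- The coefficients `T^m_j = 2(m-j+1)/((m+1)(m+2))`. -/
def appellT (m j : ℕ) : ℝ :=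
  (2 * ((m : ℝ) - (j : ℝ) + 1)) / (((m : ℝ) + 1) * ((m : ℝ) + 2))

/-- The `m`-th quaternionic Appell polynomial
`Q_m(x) = Σ_{j=0}^m T^m_j x^{m-j} x̄^j`. -/
def appellQ (m : ℕ) (x : ℍ[ℝ]) : ℍ[ℝ] :=
  ∑ j ∈ Finset.range (m + 1), appellT m j • (x ^ (m - j) * (star x) ^ j)

/-- The normalizing constants `c_m = Σ_{j=0}^m (-1)^j T^m_j`. -/
def appellc (m : ℕ) : ℝ := ∑ j ∈ Finset.range (m + 1), (-1 : ℝ) ^ j * appellT m j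

/-- The polynomials `P_m = Q_m / c_m`. -/
def appellP (m : ℕ) (x : ℍ[ℝ]) : ℍ[ℝ] := (appellc m)⁻¹ • appellQ m x

lemma sum_lin (m : ℕ) : ∑ j ∈ Finset.range (m + 1), ((m : ℝ) - j + 1) =
    ((m : ℝ) + 1) * ((m : ℝ) + 2) / 2 := by
  induction m with
  | zero => simp
  | succ m ih =>
    rw [Finset.sum_range_succ]
    have h : ∀ j ∈ Finset.range (m + 1), ((((m:ℕ) + 1 : ℕ) : ℝ) - j + 1) =
        ((m : ℝ) - j + 1) + 1 := by
      intro j _; push_cast; ring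
    rw [Finset.sum_congr rfl h, Finset.sum_add_distrib, ih]
    simp only [Finset.sum_const, Finset.card_range, nsmul_eq_mul, mul_one]
    push_cast; ring

lemma sum_appellT (m : ℕ) : ∑ j ∈ Finset.range (m + 1), appellT m j = 1 := by
  have h1 : ((m : ℝ) + 1) * ((m : ℝ) + 2) ≠ 0 := by positivity
  unfold appellT
  rw [← Finset.sum_div, div_eq_one_iff_eq h1, ← Finset.mul_sum, sum_lin]
  ring

lemma sum_alt (m : ℕ) : ∑ j ∈ Finset.range (m + 1), (-1 : ℝ) ^ j * ((m : ℝ) - j + 1) =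
    (2 * m + 3 + (-1 : ℝ) ^ m) / 4 := by
  induction m with
  | zero => norm_num
  | succ m ih =>
    rw [Finset.sum_range_succ']
    have h : ∀ j ∈ Finset.range (m + 1), (-1 : ℝ) ^ (j + 1) *
        ((((m:ℕ) + 1 : ℕ) : ℝ) - ((j : ℕ) + 1 : ℕ) + 1) =
        -((-1 : ℝ) ^ j * ((m : ℝ) - j + 1)) := by
      intro j _; push_cast; ring
    rw [Finset.sum_congr rfl h, Finset.sum_neg_distrib, ih]
    push_cast; ring

lemma appellc_pos (m : ℕ) : 0 < appellc m := by
  have h1 : (0:ℝ) < ((m : ℝ) + 1) * ((m : ℝ) + 2) := by positivity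
  unfold appellc appellT
  have h : ∀ j ∈ Finset.range (m + 1), (-1 : ℝ) ^ j *
      ((2 * ((m : ℝ) - (j:ℝ) + 1)) / (((m : ℝ) + 1) * ((m : ℝ) + 2)))
      = 2 * ((-1:ℝ)^j * ((m:ℝ) - j + 1)) / (((m : ℝ) + 1) * ((m : ℝ) + 2)) := by
    intro j _; ring
  rw [Finset.sum_congr rfl h, ← Finset.sum_div, ← Finset.mul_sum, sum_alt]
  apply div_pos _ h1
  have h2 : (-1:ℝ) ≤ (-1:ℝ)^m := by
    have := neg_abs_le ((-1:ℝ)^m); rwa [abs_neg_one_pow] at this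
  nlinarith [Nat.cast_nonneg (α := ℝ) m]

lemma appellP_coe (m : ℕ) (t : ℝ) :
    appellP m (t : ℍ[ℝ]) = (((appellc m)⁻¹ * t ^ m : ℝ) : ℍ[ℝ]) := by
  unfold appellP appellQ
  have h : ∀ j ∈ Finset.range (m + 1),
      appellT m j • ((t : ℍ[ℝ]) ^ (m - j) * (star (t : ℍ[ℝ])) ^ j)
      = appellT m j • ((t ^ m : ℝ) : ℍ[ℝ]) := by
    intro j hj
    have hj' : j ≤ m := Nat.lt_succ_iff.mp (Finset.mem_range.mp hj)
    rw [Quaternion.star_coe, ← Quaternion.coe_pow, ← Quaternion.coe_pow,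
      ← Quaternion.coe_mul, ← pow_add, Nat.sub_add_cancel hj']
  rw [Finset.sum_congr rfl h, ← Finset.sum_smul, sum_appellT, one_smul,
    ← Quaternion.coe_smul, smul_eq_mul]


/-- Uniqueness of the coefficients of expansions along the polynomials `P_n`:
if `Σ_n P_n(x) b_n` and `Σ_n P_n(x) d_n` both converge and coincide on a ball
around the origin, then `b_n = d_n` for every `n`. -/
theorem appellP_coefficients_unique (b d : ℕ → ℍ[ℝ]) (ε : ℝ) (hε : 0 < ε)
    (hb : ∀ x : ℍ[ℝ], ‖x‖ < ε → Summable fun n => appellP n x * b n)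
    (hd : ∀ x : ℍ[ℝ], ‖x‖ < ε → Summable fun n => appellP n x * d n)
    (heq : ∀ x : ℍ[ℝ], ‖x‖ < ε →
      (∑' n, appellP n x * b n) = ∑' n, appellP n x * d n) :
    ∀ n, b n = d n := by
  set c : ℕ → ℍ[ℝ] := fun n => (appellc n)⁻¹ • (b n - d n) with hc
  set p : FormalMultilinearSeries ℝ ℝ ℍ[ℝ] :=
    fun n => ContinuousMultilinearMap.mkPiRing ℝ (Fin n) (c n) with hp
  have key : ∀ t : ℝ, |t| < ε → HasSum (fun n => t ^ n • c n) 0 := by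
    intro t ht
    have hnorm : ‖(t : ℍ[ℝ])‖ < ε := by rwa [Quaternion.norm_coe, Real.norm_eq_abs]
    have h1 := (hb _ hnorm).hasSum
    have h2 := (hd _ hnorm).hasSum
    have h3 := heq _ hnorm
    have h4 := h1.sub h2
    rw [h3, sub_self] at h4
    have he : (fun n => appellP n (t : ℍ[ℝ]) * b n - appellP n (t : ℍ[ℝ]) * d n)
        = fun n => t ^ n • c n := by
      funext n
      rw [← mul_sub, appellP_coe, Quaternion.coe_mul_eq_smul, hc, smul_smul, mul_comm]
    rwa [he] at h4
  -- radius bound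
  set t₀ : ℝ := ε / 2 with ht₀def
  have ht₀pos : 0 < t₀ := by positivity
  have ht₀lt : |t₀| < ε := by rw [abs_of_pos ht₀pos]; linarith
  have hsum := (key t₀ ht₀lt).summable
  obtain ⟨C, hC⟩ : ∃ C, ∀ n, ‖t₀ ^ n • c n‖ ≤ C := by
    have h5 : Filter.Tendsto (fun n => ‖t₀ ^ n • c n‖) Filter.atTop (nhds 0) := by
      simpa using hsum.tendsto_atTop_zero.norm
    obtain ⟨C, hC⟩ := h5.bddAbove_range
    exact ⟨C, fun n => hC (Set.mem_range_self n)⟩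
  have hpn : ∀ n, ‖p n‖ = ‖c n‖ := fun n => ContinuousMultilinearMap.norm_mkPiRing _
  have hrad : ENNReal.ofReal t₀ ≤ p.radius := by
    have := p.le_radius_of_bound C (r := Real.toNNReal t₀) (fun n => by
      rw [hpn n]
      have : ‖t₀ ^ n • c n‖ = ‖c n‖ * (Real.toNNReal t₀ : ℝ) ^ n := by
        rw [norm_smul, norm_pow, Real.norm_eq_abs, abs_of_pos ht₀pos,
          Real.coe_toNNReal _ ht₀pos.le, mul_comm]
      rw [← this]; exact hC n)
    exact this
  have hball : HasFPowerSeriesOnBall (fun _ : ℝ => (0 : ℍ[ℝ])) p 0 (ENNReal.ofReal t₀) := by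
    refine ⟨hrad, by simpa using ht₀pos, ?_⟩
    intro y hy
    have hy' : |y| < t₀ := by
      rw [EMetric.mem_ball, edist_zero_right] at hy
      rwa [← Real.norm_eq_abs, ← ENNReal.ofReal_lt_ofReal_iff ht₀pos,
        ofReal_norm_eq_enorm]
    have hys : HasSum (fun n => y ^ n • c n) 0 := key y (hy'.trans_le (by linarith))
    convert hys using 2 with n
    case e'_3 => rfl
    simp [hp, ContinuousMultilinearMap.mkPiRing_apply]
  have hzero : p = 0 := hball.hasFPowerSeriesAt.eq_zero
  intro n
  have hcn : c n = 0 := by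
    have := congrFun hzero n
    have h6 : p n (fun _ => (1 : ℝ)) = 0 := by rw [this]; simp
    simpa [hp, ContinuousMultilinearMap.mkPiRing_apply] using h6
  have hne : (appellc n)⁻¹ ≠ 0 := inv_ne_zero (appellc_pos n).ne'
  have := (smul_eq_zero.mp hcn).resolve_left hne
  exact sub_eq_zero.mp this
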